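/- Suppose a ↦ H(a) is a differentiable curve of d×d complex matrices with H(a) = H ∘ EXP(i·R(a)), where R(a) is a differentiable curve of real d×d matrices with R(0) = 0, and H(a)·H(a)* = d·I for all a in a neighborhood of 0. Then the matrix R'(0) satisfies, for all 1 ≤ j < k ≤ d: Σ_{m=1}^{d} H_{j,m}·conj(H_{k,m})·(R'(0)_{j,m} - R'(0)_{k,m}) = 0. -/

import Mathlib

open Matrix

theorem stmt_11 (d : ℕ) (H : Matrix (Fin d) (Fin d) ℂ)
    (R : ℝ → Matrix (Fin d) (Fin d) ℝ)
    (hdiff : ∀ j k : Fin d, Differentiable ℝ fun a => R a j k)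
    (hR0 : R 0 = 0)
    (hHad : ∀ᶠ a in nhds (0 : ℝ),
      (Matrix.of fun j k => H j k * Complex.exp (Complex.I * (R a j k : ℝ))) *
          (Matrix.of fun j k => H j k * Complex.exp (Complex.I * (R a j k : ℝ)))ᴴ =
        (d : ℂ) • 1)
    (j k : Fin d) (hjk : j < k) :
    ∑ m : Fin d, H j m * (starRingEnd ℂ) (H k m) *
      ((deriv (fun a => R a j m) 0 : ℝ) - (deriv (fun a => R a k m) 0 : ℝ)) = 0 := by
  have hne : j ≠ k := ne_of_lt hjk
  -- the (j,k) entry function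
  set f : ℝ → ℂ := fun a => ∑ m : Fin d,
    H j m * Complex.exp (Complex.I * (R a j m : ℝ)) *
      (starRingEnd ℂ) (H k m * Complex.exp (Complex.I * (R a k m : ℝ))) with hf
  have key : ∀ m : Fin d, HasDerivAt
      (fun a => H j m * Complex.exp (Complex.I * (R a j m : ℝ)) *
        (starRingEnd ℂ) (H k m * Complex.exp (Complex.I * (R a k m : ℝ))))
      (H j m * (starRingEnd ℂ) (H k m) *
        (Complex.I * (((deriv (fun a => R a j m) 0 : ℝ) : ℂ) -
          ((deriv (fun a => R a k m) 0 : ℝ) : ℂ)))) 0 := by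
    intro m
    have h1 : HasDerivAt (fun a => ((R a j m : ℝ) : ℂ))
        (((deriv (fun a => R a j m) 0 : ℝ) : ℂ)) 0 :=
      HasDerivAt.ofReal_comp ((hdiff j m 0).hasDerivAt)
    have h2 : HasDerivAt (fun a => ((R a k m : ℝ) : ℂ))
        (((deriv (fun a => R a k m) 0 : ℝ) : ℂ)) 0 :=
      HasDerivAt.ofReal_comp ((hdiff k m 0).hasDerivAt)
    have hu : HasDerivAt (fun a => Complex.I * (((R a j m : ℝ) : ℂ) - ((R a k m : ℝ) : ℂ)))
        (Complex.I * (((deriv (fun a => R a j m) 0 : ℝ) : ℂ) -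
          ((deriv (fun a => R a k m) 0 : ℝ) : ℂ))) 0 :=
      (h1.sub h2).const_mul Complex.I
    have he := (hu.cexp).const_mul (H j m * (starRingEnd ℂ) (H k m))
    have heq : (fun a => H j m * (starRingEnd ℂ) (H k m) *
        Complex.exp (Complex.I * (((R a j m : ℝ) : ℂ) - ((R a k m : ℝ) : ℂ)))) =
        (fun a => H j m * Complex.exp (Complex.I * (R a j m : ℝ)) *
          (starRingEnd ℂ) (H k m * Complex.exp (Complex.I * (R a k m : ℝ)))) := by
      funext a
      simp only [_root_.map_mul, ← Complex.exp_conj, Complex.conj_I, Complex.conj_ofReal]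
      have hsplit : Complex.exp (Complex.I * (((R a j m : ℝ) : ℂ) - ((R a k m : ℝ) : ℂ))) =
          Complex.exp (Complex.I * ((R a j m : ℝ) : ℂ)) *
            Complex.exp (-Complex.I * ((R a k m : ℝ) : ℂ)) := by
        rw [← Complex.exp_add]; ring_nf
      rw [hsplit]; ring
    have h0 : Complex.exp (Complex.I * (((R 0 j m : ℝ) : ℂ) - ((R 0 k m : ℝ) : ℂ))) = 1 := by
      rw [hR0]; simp
    rw [heq, h0, one_mul] at he
    exact he
  have hsum : HasDerivAt f (∑ m : Fin d, H j m * (starRingEnd ℂ) (H k m) *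
      (Complex.I * (((deriv (fun a => R a j m) 0 : ℝ) : ℂ) -
        ((deriv (fun a => R a k m) 0 : ℝ) : ℂ)))) 0 :=
    HasDerivAt.fun_sum (fun m _ => key m)
  have hconst : f =ᶠ[nhds (0 : ℝ)] fun _ => (0 : ℂ) := by
    filter_upwards [hHad] with a ha
    have := congrFun (congrFun ha j) k
    simp only [Matrix.mul_apply, Matrix.conjTranspose_apply, Matrix.of_apply,
      Matrix.smul_apply, Matrix.one_apply_ne hne, smul_zero, Complex.star_def] at this
    exact this
  have hderiv0 : deriv f 0 = 0 := by
    rw [hconst.deriv_eq]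
    simp
  have hS : (∑ m : Fin d, H j m * (starRingEnd ℂ) (H k m) *
      (Complex.I * (((deriv (fun a => R a j m) 0 : ℝ) : ℂ) -
        ((deriv (fun a => R a k m) 0 : ℝ) : ℂ)))) = 0 := by
    rw [← hsum.deriv, hderiv0]
  have hfac : (∑ m : Fin d, H j m * (starRingEnd ℂ) (H k m) *
      (Complex.I * (((deriv (fun a => R a j m) 0 : ℝ) : ℂ) -
        ((deriv (fun a => R a k m) 0 : ℝ) : ℂ)))) =
      Complex.I * ∑ m : Fin d, H j m * (starRingEnd ℂ) (H k m) *
        (((deriv (fun a => R a j m) 0 : ℝ) : ℂ) - ((deriv (fun a => R a k m) 0 : ℝ) : ℂ)) := by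
    rw [Finset.mul_sum]
    exact Finset.sum_congr rfl fun m _ => by ring
  rw [hfac] at hS
  rcases mul_eq_zero.mp hS with h | h
  · exact absurd h Complex.I_ne_zero
  · exact h
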